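/- Let (Ω, 𝓕, P) be a probability space, let N: Ω → ℕ be measurable, let Y: Ω → [0,∞) be measurable and bounded, and let δ ∈ (0,1). Then E[N^{1+δ} · Y^{1−δ}] ≤ ( Σ_{n=0}^∞ n^{1+δ} · P(N = n)^δ ) · (E[Y])^{1−δ}. -/

import Mathlib

open MeasureTheory
open scoped ENNReal

/-- Moment-splitting estimate via Hölder's inequality on the
events `{N = n}`: for a probability measure `P`, a measurable `N : Ω → ℕ`, a
bounded measurable `Y ≥ 0` and `δ ∈ (0,1)`,
`E[N^{1+δ} Y^{1−δ}] ≤ (Σ_n n^{1+δ} P(N = n)^δ) · (E Y)^{1−δ}`. -/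
theorem stmt10 {Ω : Type*} [MeasurableSpace Ω] (P : Measure Ω)
    [IsProbabilityMeasure P]
    (N : Ω → ℕ) (hN : Measurable N)
    (Y : Ω → ℝ) (hY : Measurable Y) (hY0 : ∀ ω, 0 ≤ Y ω)
    (hYbd : ∃ C : ℝ, ∀ ω, Y ω ≤ C)
    (δ : ℝ) (hδ0 : 0 < δ) (hδ1 : δ < 1) :
    ∫⁻ ω, (N ω : ℝ≥0∞) ^ ((1:ℝ) + δ) * ENNReal.ofReal (Y ω) ^ ((1:ℝ) - δ) ∂P
      ≤ (∑' n : ℕ, (n : ℝ≥0∞) ^ ((1:ℝ) + δ) * P {ω | N ω = n} ^ δ)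
          * (∫⁻ ω, ENNReal.ofReal (Y ω) ∂P) ^ ((1:ℝ) - δ) := by
  have hδ' : (0:ℝ) < 1 - δ := by linarith
  set I := ∫⁻ ω, ENNReal.ofReal (Y ω) ∂P with hI
  have hg : Measurable fun ω => ENNReal.ofReal (Y ω) ^ ((1:ℝ) - δ) :=
    hY.ennreal_ofReal.pow_const _
  -- Hölder on each measurable set
  have hkey : ∀ s : Set Ω, MeasurableSet s →
      ∫⁻ ω in s, ENNReal.ofReal (Y ω) ^ ((1:ℝ) - δ) ∂P ≤ P s ^ δ * I ^ ((1:ℝ) - δ) := by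
    intro s hs
    have hpq : (1/δ).HolderConjugate (1/(1-δ)) := by
      constructor
      · simp only [one_div, inv_inv]; ring
      · positivity
      · positivity
    have H := ENNReal.lintegral_mul_le_Lp_mul_Lq (P.restrict s) hpq
      (aemeasurable_const (b := (1 : ℝ≥0∞))) hg.aemeasurable
    simp only [Pi.mul_apply, one_mul] at H
    have h1 : (∫⁻ _ , (1:ℝ≥0∞) ^ (1/δ) ∂(P.restrict s)) = P s := by
      simp [ENNReal.one_rpow]
    have h2 : ∀ ω, (ENNReal.ofReal (Y ω) ^ ((1:ℝ) - δ)) ^ (1/(1-δ))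
        = ENNReal.ofReal (Y ω) := by
      intro ω
      rw [← ENNReal.rpow_mul]
      rw [mul_one_div, div_self (ne_of_gt hδ'), ENNReal.rpow_one]
    rw [h1] at H
    simp only [h2] at H
    have h3 : (1:ℝ) / (1/δ) = δ := by field_simp
    have h4 : (1:ℝ) / (1/(1-δ)) = 1 - δ := by field_simp
    rw [h3, h4] at H
    exact H.trans (mul_le_mul_right
      (ENNReal.rpow_le_rpow (setLIntegral_le_lintegral _ _) hδ'.le) _)
  -- pointwise decomposition
  have hpt : ∀ ω, (N ω : ℝ≥0∞) ^ ((1:ℝ) + δ) * ENNReal.ofReal (Y ω) ^ ((1:ℝ) - δ)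
      = ∑' n : ℕ, Set.indicator {ω' | N ω' = n}
          (fun ω' => (n : ℝ≥0∞) ^ ((1:ℝ) + δ) * ENNReal.ofReal (Y ω') ^ ((1:ℝ) - δ)) ω := by
    intro ω
    rw [tsum_eq_single (N ω)]
    · simp [Set.indicator_of_mem, Set.mem_setOf_eq]
    · intro b hb
      apply Set.indicator_of_notMem
      simp only [Set.mem_setOf_eq]
      exact fun h => hb h.symm
  calc ∫⁻ ω, (N ω : ℝ≥0∞) ^ ((1:ℝ) + δ) * ENNReal.ofReal (Y ω) ^ ((1:ℝ) - δ) ∂P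
      = ∑' n : ℕ, ∫⁻ ω, Set.indicator {ω' | N ω' = n}
          (fun ω' => (n : ℝ≥0∞) ^ ((1:ℝ) + δ) * ENNReal.ofReal (Y ω') ^ ((1:ℝ) - δ)) ω ∂P := by
        simp_rw [hpt]
        exact lintegral_tsum fun n =>
          ((measurable_const.mul hg).indicator (hN (measurableSet_singleton n))).aemeasurable
    _ = ∑' n : ℕ, (n : ℝ≥0∞) ^ ((1:ℝ) + δ)
          * ∫⁻ ω in {ω' | N ω' = n}, ENNReal.ofReal (Y ω) ^ ((1:ℝ) - δ) ∂P := by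
        congr 1; funext n
        have hsn : MeasurableSet {ω' | N ω' = n} := hN (measurableSet_singleton n)
        rw [lintegral_indicator hsn _,
          lintegral_const_mul _ hg]
    _ ≤ ∑' n : ℕ, (n : ℝ≥0∞) ^ ((1:ℝ) + δ) * (P {ω' | N ω' = n} ^ δ * I ^ ((1:ℝ) - δ)) := by
        gcongr with n
        exact hkey _ (hN (measurableSet_singleton n))
    _ = (∑' n : ℕ, (n : ℝ≥0∞) ^ ((1:ℝ) + δ) * P {ω | N ω = n} ^ δ) * I ^ ((1:ℝ) - δ) := by
        simp_rw [← mul_assoc]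
        exact ENNReal.tsum_mul_right
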